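/- For p, q ≥ 1, the number of pairs of non-intersecting monotone lattice paths, one from (1,0) to (p, q−1) and one from (0,1) to (p−1, q) (using unit north and east steps, with no common lattice point), equals C(p+q−2, q−1)² − C(p+q−2, q)·C(p+q−2, p), which equals (1/(p+q−1))·C(p+q−1, p−1)·C(p+q−1, q−1). -/

import Mathlib

def stepPoints : ℕ × ℕ → List Bool → List (ℕ × ℕ)
  | st, [] => [st]
  | st, step :: rest =>
      st :: stepPoints (if step then (st.1, st.2 + 1) else (st.1 + 1, st.2)) rest

namespace Stmt19

def pos (st : ℕ × ℕ) (s : List Bool) (k : ℕ) : ℕ × ℕ :=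
  (st.1 + (s.take k).count false, st.2 + (s.take k).count true)

lemma pos_zero (st : ℕ × ℕ) (s : List Bool) : pos st s 0 = st := by
  simp [pos]

lemma pos_cons (st : ℕ × ℕ) (b : Bool) (rest : List Bool) (k : ℕ) :
    pos st (b :: rest) (k + 1) =
      pos (if b then (st.1, st.2 + 1) else (st.1 + 1, st.2)) rest k := by
  cases b <;> simp [pos, List.count_cons] <;> omega

lemma stepPoints_eq (st : ℕ × ℕ) (s : List Bool) :
    stepPoints st s = (List.range (s.length + 1)).map (pos st s) := by
  induction s generalizing st with
  | nil => simp [stepPoints, List.range_succ, pos]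
  | cons b rest ih =>
      rw [stepPoints, ih, List.length_cons]
      conv_rhs => rw [List.range_succ_eq_map]
      rw [List.map_cons, List.map_map]
      simp only [Function.comp_def, pos_zero, pos_cons]

lemma mem_stepPoints {pt st : ℕ × ℕ} {s : List Bool} :
    pt ∈ stepPoints st s ↔ ∃ k ≤ s.length, pt = pos st s k := by
  simp [stepPoints_eq, List.mem_map, List.mem_range, Nat.lt_succ_iff, eq_comm]

lemma count_add (l : List Bool) : l.count false + l.count true = l.length := by
  induction l with
  | nil => simp
  | cons b rest ih => cases b <;> simp [List.count_cons] <;> omega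

lemma pos_sum (st : ℕ × ℕ) (s : List Bool) (k : ℕ) (h : k ≤ s.length) :
    (pos st s k).1 + (pos st s k).2 = st.1 + st.2 + k := by
  have h2 := count_add (s.take k)
  rw [List.length_take, min_eq_left h] at h2
  simp only [pos]
  omega

lemma pos_stop (st : ℕ × ℕ) (s : List Bool) (k : ℕ) (h : s.length ≤ k) :
    pos st s k = pos st s s.length := by
  simp [pos, List.take_of_length_le h, List.take_of_length_le (le_refl s.length)]

/-! ### Counting lists by their counts -/

lemma count_ofFn {n : ℕ} (f : Fin n → Bool) (y : Bool) :
    (List.ofFn f).count y = (Finset.univ.filter fun i => f i = y).card := by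
  induction n with
  | zero => simp
  | succ n ih =>
      rw [List.ofFn_succ, List.count_cons, ih (fun i => f i.succ)]
      conv_rhs => rw [Finset.card_filter, Fin.sum_univ_succ, ← Finset.card_filter]
      by_cases h : f 0 = y <;> simp [h] <;> omega

def PS (a b : ℕ) : Set (List Bool) := {l | l.count false = a ∧ l.count true = b}

def G (a b : ℕ) (s : {s : Finset (Fin (a + b)) // s.card = b}) : List Bool :=
  List.ofFn (fun i => decide (i ∈ s.1))

lemma PS_eq_range (a b : ℕ) : PS a b = Set.range (G a b) := by
  ext l
  constructor
  · rintro ⟨hf, ht⟩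
    have hlen : l.length = a + b := by rw [← count_add l, hf, ht]
    set f : Fin (a + b) → Bool := fun i => l.get (Fin.cast hlen.symm i) with hfdef
    have hofn : List.ofFn f = l := by
      apply List.ext_get (by simp [hlen])
      intro i h1 h2
      simp [hfdef]
    have hcount : (Finset.univ.filter fun i => f i = true).card = b := by
      have := count_ofFn f true
      rw [hofn, ht] at this
      omega
    refine ⟨⟨Finset.univ.filter fun i => f i = true, hcount⟩, ?_⟩
    rw [← hofn]
    unfold G
    congr 1
    funext i
    by_cases h : f i = true <;> simp [h]
  · rintro ⟨s, rfl⟩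
    have ht : (G a b s).count true = b := by
      have hfe : (Finset.univ.filter fun i => decide (i ∈ s.1) = true) = s.1 := by
        ext i; simp
      rw [G, count_ofFn, hfe, s.2]
    have hlen : (G a b s).length = a + b := by simp [G]
    have := count_add (G a b s)
    exact ⟨by omega, ht⟩

lemma G_inj (a b : ℕ) : Function.Injective (G a b) := by
  intro s t h
  have h2 := List.ofFn_injective h
  ext i
  have := congrFun h2 i
  simpa using this

lemma ncard_PS (a b : ℕ) : (PS a b).ncard = (a + b).choose b := by
  rw [PS_eq_range, ← Set.image_univ, Set.ncard_image_of_injective _ (G_inj a b),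
    Set.ncard_univ, Nat.card_eq_fintype_card, Fintype.card_finset_len,
    Fintype.card_fin]

lemma PS_finite (a b : ℕ) : (PS a b).Finite := by
  rw [PS_eq_range]; exact Set.finite_range _

def PP (c1 c2 c3 c4 : ℕ) : Set (List Bool × List Bool) := PS c1 c2 ×ˢ PS c3 c4

lemma mem_PP {c1 c2 c3 c4 : ℕ} {sp : List Bool × List Bool} :
    sp ∈ PP c1 c2 c3 c4 ↔ sp.1.count false = c1 ∧ sp.1.count true = c2 ∧
      sp.2.count false = c3 ∧ sp.2.count true = c4 := by
  simp [PP, PS, Set.mem_prod, and_assoc]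

lemma PP_finite (c1 c2 c3 c4 : ℕ) : (PP c1 c2 c3 c4).Finite :=
  (PS_finite c1 c2).prod (PS_finite c3 c4)

lemma ncard_PP (c1 c2 c3 c4 : ℕ) :
    (PP c1 c2 c3 c4).ncard = (c1 + c2).choose c2 * (c3 + c4).choose c4 := by
  rw [PP, ← Nat.card_coe_set_eq, Nat.card_congr (Equiv.Set.prod _ _), Nat.card_prod,
    Nat.card_coe_set_eq, Nat.card_coe_set_eq, ncard_PS, ncard_PS]

/-! ### Meeting -/

def Meets : Set (List Bool × List Bool) :=
  {sp | ∃ k, pos (1, 0) sp.1 k = pos (0, 1) sp.2 k}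

lemma shared_iff {s t : List Bool} (hlen : s.length = t.length) :
    (∃ pt : ℕ × ℕ, pt ∈ stepPoints (1, 0) s ∧ pt ∈ stepPoints (0, 1) t) ↔ (s, t) ∈ Meets := by
  constructor
  · rintro ⟨pt, h1, h2⟩
    obtain ⟨i, hi, rfl⟩ := mem_stepPoints.1 h1
    obtain ⟨j, hj, hij⟩ := mem_stepPoints.1 h2
    have e1 := pos_sum (1, 0) s i hi
    have e2 := pos_sum (0, 1) t j hj
    rw [← hij] at e2
    have : i = j := by omega
    exact ⟨i, by rw [hij, this]⟩
  · rintro ⟨k, hk⟩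
    set k' := min k s.length with hk'def
    have hk's : k' ≤ s.length := min_le_right _ _
    have hk't : k' ≤ t.length := hlen ▸ hk's
    have hP : pos (1, 0) s k' = pos (0, 1) t k' := by
      rcases le_or_gt k s.length with h | h
      · rwa [hk'def, min_eq_left h]
      · rw [hk'def, min_eq_right h.le]
        rw [pos_stop (1, 0) s k h.le, pos_stop (0, 1) t k (by omega)] at hk
        rw [hk, hlen]
    exact ⟨pos (1, 0) s k', mem_stepPoints.2 ⟨k', hk's, rfl⟩,
      mem_stepPoints.2 ⟨k', hk't, hP ▸ rfl⟩⟩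

/-! ### The swap involution -/

open Classical in
noncomputable def swap (sp : List Bool × List Bool) : List Bool × List Bool :=
  if h : ∃ k, pos (1, 0) sp.1 k = pos (0, 1) sp.2 k then
    ((sp.1.take (Nat.find h)) ++ (sp.2.drop (Nat.find h)),
     (sp.2.take (Nat.find h)) ++ (sp.1.drop (Nat.find h)))
  else sp

lemma pos_take_append (st : ℕ × ℕ) (s x : List Bool) {j k : ℕ} (hj : j ≤ k)
    (hk : k ≤ s.length) : pos st (s.take k ++ x) j = pos st s j := by
  unfold pos
  rw [List.take_append_of_le_length (by simp; omega), List.take_take, min_eq_left hj]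


lemma find_le_length {s t : List Bool} (hlen : s.length = t.length)
    (h : ∃ k, pos (1, 0) s k = pos (0, 1) t k) : Nat.find h ≤ s.length := by
  obtain ⟨k, hk⟩ := id h
  have hP : pos (1, 0) s (min k s.length) = pos (0, 1) t (min k s.length) := by
    rcases le_or_gt k s.length with hc | hc
    · rw [min_eq_left hc]; exact hk
    · rw [min_eq_right hc.le]
      rw [pos_stop (1, 0) s k hc.le, pos_stop (0, 1) t k (by omega)] at hk
      rw [hk, hlen]
  exact le_trans (Nat.find_min' h hP) (min_le_right _ _)

lemma swap_spec {s t : List Bool} (hlen : s.length = t.length) (h : (s, t) ∈ Meets) :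
    ∃ k ≤ s.length,
      swap (s, t) = (s.take k ++ t.drop k, t.take k ++ s.drop k) ∧
      1 + (s.take k).count false = (t.take k).count false ∧
      (s.take k).count true = 1 + (t.take k).count true ∧
      swap (swap (s, t)) = (s, t) ∧ swap (s, t) ∈ Meets := by
  obtain h : ∃ k, pos (1, 0) s k = pos (0, 1) t k := h
  set k := Nat.find h with hkdef
  have hks : k ≤ s.length := find_le_length hlen h
  have hkt : k ≤ t.length := hlen ▸ hks
  have hspec : pos (1, 0) s k = pos (0, 1) t k := Nat.find_spec h
  have hx : 1 + (s.take k).count false = (t.take k).count false := by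
    have := congrArg Prod.fst hspec; simpa [pos] using this
  have hy : (s.take k).count true = 1 + (t.take k).count true := by
    have := congrArg Prod.snd hspec; simpa [pos, eq_comm] using this
  have hswap : swap (s, t) = (s.take k ++ t.drop k, t.take k ++ s.drop k) := by
    rw [swap, dif_pos h]
  set s' := s.take k ++ t.drop k with hs'
  set t' := t.take k ++ s.drop k with ht'
  have hpos_s' : ∀ j ≤ k, pos (1, 0) s' j = pos (1, 0) s j := fun j hj =>
    pos_take_append _ s _ hj hks
  have hpos_t' : ∀ j ≤ k, pos (0, 1) t' j = pos (0, 1) t j := fun j hj =>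
    pos_take_append _ t _ hj hkt
  have h' : ∃ k, pos (1, 0) s' k = pos (0, 1) t' k := by
    refine ⟨k, ?_⟩
    rw [hpos_s' k le_rfl, hpos_t' k le_rfl]; exact hspec
  have hfind' : Nat.find h' = k := by
    apply le_antisymm
    · apply Nat.find_min'
      rw [hpos_s' k le_rfl, hpos_t' k le_rfl]; exact hspec
    · by_contra hcon
      push_neg at hcon
      have hj := Nat.find_spec h'
      set j := Nat.find h' with hj'
      rw [hpos_s' j hcon.le, hpos_t' j hcon.le] at hj
      exact Nat.find_min h hcon hj
  have htake_s' : s'.take k = s.take k := by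
    rw [hs', List.take_append_of_le_length (by simp; omega), List.take_take, min_self]
  have htake_t' : t'.take k = t.take k := by
    rw [ht', List.take_append_of_le_length (by simp; omega), List.take_take, min_self]
  have hdrop_s' : s'.drop k = t.drop k := by
    rw [hs', List.drop_append_of_le_length (by simp; omega)]
    simp [List.length_take, min_eq_left hks]
  have hdrop_t' : t'.drop k = s.drop k := by
    rw [ht', List.drop_append_of_le_length (by simp; omega)]
    simp [List.length_take, min_eq_left hkt]
  have hswapswap : swap (swap (s, t)) = (s, t) := by
    rw [hswap, swap, dif_pos h', hfind']
    simp only [← hs', ← ht', htake_s', htake_t', hdrop_s', hdrop_t']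
    rw [List.take_append_drop, List.take_append_drop]
  exact ⟨k, hks, hswap, hx, hy, hswapswap, by rw [hswap]; exact h'⟩


lemma int_ivt (f : ℕ → ℤ) (n : ℕ) (h0 : 0 ≤ f 0) (hn : f n < 0)
    (hstep : ∀ k, f k - 1 ≤ f (k + 1)) : ∃ k ≤ n, f k = 0 := by
  induction n with
  | zero => exact absurd hn (by omega)
  | succ n ih =>
      by_cases hc : f n < 0
      · obtain ⟨k, hk, hk0⟩ := ih hc
        exact ⟨k, hk.trans (Nat.le_succ n), hk0⟩
      · exact ⟨n, Nat.le_succ n, by have := hstep n; omega⟩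

lemma count_take_succ (l : List Bool) (y : Bool) (k : ℕ) :
    (l.take k).count y ≤ (l.take (k + 1)).count y ∧
      (l.take (k + 1)).count y ≤ (l.take k).count y + 1 := by
  rw [List.take_succ, List.count_append]
  have h1 : (l[k]?).toList.count y ≤ 1 :=
    le_trans (List.count_le_length) (by cases h : l[k]? <;> simp [h])
  omega

lemma len_of_PP {c1 c2 c3 c4 : ℕ} {sp : List Bool × List Bool}
    (h : sp ∈ PP c1 c2 c3 c4) : sp.1.length = c1 + c2 ∧ sp.2.length = c3 + c4 := by
  obtain ⟨h1, h2, h3, h4⟩ := mem_PP.1 h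
  constructor
  · rw [← count_add sp.1, h1, h2]
  · rw [← count_add sp.2, h3, h4]

lemma meets_all {A B : ℕ} {sp : List Bool × List Bool}
    (h : sp ∈ PP A (B + 2) (A + 2) B) : sp ∈ Meets := by
  obtain ⟨h1, h2, h3, h4⟩ := mem_PP.1 h
  obtain ⟨hl1, hl2⟩ := len_of_PP h
  set m := A + B + 2 with hm
  have hl1' : sp.1.length = m := by omega
  have hl2' : sp.2.length = m := by omega
  set f : ℕ → ℤ := fun k =>
    1 + ((sp.1.take k).count false : ℤ) - ((sp.2.take k).count false : ℤ) with hf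
  have h0 : 0 ≤ f 0 := by simp [hf]
  have hmn : f m < 0 := by
    have e1 : sp.1.take m = sp.1 := List.take_of_length_le (by omega)
    have e2 : sp.2.take m = sp.2 := List.take_of_length_le (by omega)
    simp only [hf, e1, e2, h1, h3]
    push_cast
    omega
  have hstep : ∀ k, f k - 1 ≤ f (k + 1) := by
    intro k
    have c1 := count_take_succ sp.1 false k
    have c2 := count_take_succ sp.2 false k
    simp only [hf]
    push_cast
    omega
  obtain ⟨k, hk, hk0⟩ := int_ivt f m h0 hmn hstep
  have hxeq : 1 + (sp.1.take k).count false = (sp.2.take k).count false := by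
    simp only [hf] at hk0
    push_cast at hk0
    omega
  have e1 := pos_sum (1, 0) sp.1 k (by omega)
  have e2 := pos_sum (0, 1) sp.2 k (by omega)
  refine ⟨k, Prod.ext ?_ ?_⟩
  · simpa [pos] using hxeq
  · have hfst : (pos (1, 0) sp.1 k).1 = (pos (0, 1) sp.2 k).1 := by
      simpa [pos] using hxeq
    omega

lemma swap_mem {c1 c2 c3 c4 : ℕ} {sp : List Bool × List Bool}
    (hpp : sp ∈ PP c1 c2 c3 c4) (hl : c1 + c2 = c3 + c4) (hm : sp ∈ Meets) :
    swap sp ∈ PP (c3 - 1) (c4 + 1) (c1 + 1) (c2 - 1) ∧ 1 ≤ c3 ∧ 1 ≤ c2 ∧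
      swap (swap sp) = sp ∧ swap sp ∈ Meets := by
  obtain ⟨h1, h2, h3, h4⟩ := mem_PP.1 hpp
  obtain ⟨hl1, hl2⟩ := len_of_PP hpp
  have hlen : sp.1.length = sp.2.length := by omega
  have hm' : (sp.1, sp.2) ∈ Meets := hm
  obtain ⟨k, hks, hswap, hx, hy, hss, hsm⟩ := swap_spec hlen hm'
  have hswap' : swap sp = (sp.1.take k ++ sp.2.drop k, sp.2.take k ++ sp.1.drop k) := hswap
  have ds1f : (sp.1.take k).count false + (sp.1.drop k).count false = c1 := by
    rw [← List.count_append, List.take_append_drop]; exact h1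
  have ds1t : (sp.1.take k).count true + (sp.1.drop k).count true = c2 := by
    rw [← List.count_append, List.take_append_drop]; exact h2
  have ds2f : (sp.2.take k).count false + (sp.2.drop k).count false = c3 := by
    rw [← List.count_append, List.take_append_drop]; exact h3
  have ds2t : (sp.2.take k).count true + (sp.2.drop k).count true = c4 := by
    rw [← List.count_append, List.take_append_drop]; exact h4
  have hc3 : 1 ≤ c3 := by omega
  have hc2 : 1 ≤ c2 := by omega
  refine ⟨?_, hc3, hc2, hss, hsm⟩
  rw [hswap']
  rw [mem_PP]
  refine ⟨?_, ?_, ?_, ?_⟩ <;> simp only [List.count_append] <;> omega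

lemma ncard_meets (A B : ℕ) :
    ((PP (A + 1) (B + 1) (A + 1) (B + 1)) ∩ Meets).ncard = (PP A (B + 2) (A + 2) B).ncard := by
  apply Set.ncard_congr (fun sp _ => swap sp)
  · rintro sp ⟨hpp, hm⟩
    have := (swap_mem hpp (by omega) hm).1
    simpa using this
  · rintro sp1 sp2 ⟨hpp1, hm1⟩ ⟨hpp2, hm2⟩ heq
    have e1 := (swap_mem hpp1 (by omega) hm1).2.2.2.1
    have e2 := (swap_mem hpp2 (by omega) hm2).2.2.2.1
    rw [← e1, ← e2, heq]
  · intro u hu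
    have hm : u ∈ Meets := meets_all hu
    obtain ⟨hmem, _, _, hss, hsm⟩ := swap_mem hu (by omega) hm
    refine ⟨swap u, ⟨?_, hsm⟩, hss⟩
    have : A + 2 - 1 = A + 1 := by omega
    have hb : B + 2 - 1 = B + 1 := by omega
    rw [this, hb] at hmem
    exact hmem


lemma ncard_I (a b : ℕ) :
    (PP a b a b ∩ Meets).ncard = (a + b).choose (b + 1) * (a + b).choose (a + 1) := by
  match a, b with
  | 0, b =>
      have hempty : PP 0 b 0 b ∩ Meets = ∅ := by
        ext sp
        simp only [Set.mem_inter_iff, Set.mem_empty_iff_false, iff_false, not_and]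
        rintro hpp ⟨k, hk⟩
        obtain ⟨h1, h2, h3, h4⟩ := mem_PP.1 hpp
        have hx := congrArg Prod.fst hk
        simp only [pos] at hx
        have hle : (sp.2.take k).count false ≤ sp.2.count false :=
          (List.take_sublist k sp.2).count_le false
        omega
      rw [hempty, Set.ncard_empty, Nat.choose_eq_zero_of_lt (show 0 + b < b + 1 by omega)]
      ring
  | a + 1, 0 =>
      have hempty : PP (a + 1) 0 (a + 1) 0 ∩ Meets = ∅ := by
        ext sp
        simp only [Set.mem_inter_iff, Set.mem_empty_iff_false, iff_false, not_and]
        rintro hpp ⟨k, hk⟩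
        obtain ⟨h1, h2, h3, h4⟩ := mem_PP.1 hpp
        have hy := congrArg Prod.snd hk
        simp only [pos] at hy
        have hle : (sp.1.take k).count true ≤ sp.1.count true :=
          (List.take_sublist k sp.1).count_le true
        omega
      rw [hempty, Set.ncard_empty,
        Nat.choose_eq_zero_of_lt (show a + 1 + 0 < a + 1 + 1 by omega)]
      ring
  | A + 1, B + 1 =>
      rw [ncard_meets A B, ncard_PP]
      rw [show A + (B + 2) = A + 1 + (B + 1) by omega, show A + 2 + B = A + 1 + (B + 1) by omega]
      congr 1
      have h := Nat.choose_symm (show A + 1 + 1 ≤ A + 1 + (B + 1) by omega)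
      rw [show A + 1 + (B + 1) - (A + 1 + 1) = B by omega] at h
      exact h

lemma ncard_split (a b : ℕ) :
    (PP a b a b \ Meets).ncard + (a + b).choose (b + 1) * (a + b).choose (a + 1) =
      (a + b).choose b * (a + b).choose b := by
  rw [← ncard_I a b, ← ncard_PP a b a b]
  have h := Set.ncard_inter_add_ncard_diff_eq_ncard (PP a b a b) Meets (PP_finite a b a b)
  omega

lemma set_eq (a b : ℕ) :
    {sp : List Bool × List Bool |
        sp.1.count false = a ∧ sp.1.count true = b ∧
        sp.2.count false = a ∧ sp.2.count true = b ∧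
        ∀ pt : ℕ × ℕ, pt ∈ stepPoints (1, 0) sp.1 → pt ∉ stepPoints (0, 1) sp.2}
      = PP a b a b \ Meets := by
  ext sp
  simp only [Set.mem_setOf_eq, Set.mem_diff, mem_PP]
  constructor
  · rintro ⟨h1, h2, h3, h4, h5⟩
    refine ⟨⟨h1, h2, h3, h4⟩, fun hm => ?_⟩
    have hlen : sp.1.length = sp.2.length := by
      have e1 := count_add sp.1; have e2 := count_add sp.2; omega
    obtain ⟨pt, hp1, hp2⟩ := (shared_iff hlen).2 hm
    exact h5 pt hp1 hp2
  · rintro ⟨⟨h1, h2, h3, h4⟩, hm⟩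
    refine ⟨h1, h2, h3, h4, fun pt hp1 hp2 => ?_⟩
    have hlen : sp.1.length = sp.2.length := by
      have e1 := count_add sp.1; have e2 := count_add sp.2; omega
    exact hm ((shared_iff hlen).1 ⟨pt, hp1, hp2⟩)

lemma qid (a b : ℕ) :
    ((a + b).choose b : ℚ) ^ 2 - ((a + b).choose (b + 1) : ℚ) * ((a + b).choose (a + 1) : ℚ)
      = (1 / ((a + b + 1 : ℕ) : ℚ)) * ((a + b + 1).choose a : ℚ) * ((a + b + 1).choose b : ℚ) := by
  match a, b with
  | 0, b =>
      have h1 : (b : ℚ) + 1 ≠ 0 := by positivity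
      simp [Nat.choose_self, Nat.choose_eq_zero_of_lt (show b < b + 1 by omega),
        Nat.choose_succ_self_right]
      push_cast
      field_simp
  | a + 1, 0 =>
      have h1 : (a : ℚ) + 2 ≠ 0 := by positivity
      simp [Nat.choose_self, Nat.choose_eq_zero_of_lt (show a + 1 < a + 2 by omega),
        Nat.choose_succ_self_right]
      push_cast
      field_simp
  | A + 1, B + 1 =>
      rw [show A + 1 + (B + 1) = A + B + 2 by omega]
      rw [show A + B + 2 + 1 = A + B + 3 by omega]
      rw [Nat.cast_choose ℚ (show B + 1 ≤ A + B + 2 by omega),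
        Nat.cast_choose ℚ (show B + 1 + 1 ≤ A + B + 2 by omega),
        Nat.cast_choose ℚ (show A + 1 + 1 ≤ A + B + 2 by omega),
        Nat.cast_choose ℚ (show A + 1 ≤ A + B + 3 by omega),
        Nat.cast_choose ℚ (show B + 1 ≤ A + B + 3 by omega)]
      rw [show A + B + 2 - (B + 1) = A + 1 by omega,
        show A + B + 2 - (B + 1 + 1) = A by omega,
        show A + B + 2 - (A + 1 + 1) = B by omega,
        show A + B + 3 - (A + 1) = B + 2 by omega,
        show A + B + 3 - (B + 1) = A + 2 by omega]
      rw [show A + B + 3 = (A + B + 2) + 1 by omega,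
        show B + 1 + 1 = B + 2 by omega, show A + 1 + 1 = A + 2 by omega]
      rw [show (A + 2) = (A + 1) + 1 by omega, show (B + 2) = (B + 1) + 1 by omega]
      rw [Nat.factorial_succ (A + B + 2), Nat.factorial_succ (A + 1),
        Nat.factorial_succ (B + 1), Nat.factorial_succ A, Nat.factorial_succ B]
      have nz : ∀ n : ℕ, ((n.factorial : ℚ)) ≠ 0 := fun n => by
        exact_mod_cast Nat.cast_ne_zero.2 (Nat.factorial_ne_zero n)
      have nzA := nz A; have nzB := nz B; have nzN := nz (A + B + 2)
      push_cast
      have h1 : (A : ℚ) + 1 ≠ 0 := by positivity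
      have h2 : (B : ℚ) + 1 ≠ 0 := by positivity
      have h3 : (A : ℚ) + 1 + 1 ≠ 0 := by positivity
      have h4 : (B : ℚ) + 1 + 1 ≠ 0 := by positivity
      have h5 : (A : ℚ) + B + 2 + 1 ≠ 0 := by positivity
      field_simp
      ring

end Stmt19

/-- For `p, q ≥ 1`, the number of pairs of non-intersecting monotone lattice paths,
one from `(1,0)` to `(p, q−1)` and one from `(0,1)` to `(p−1, q)` (sharing no lattice
point), equals `C(p+q−2, q−1)² − C(p+q−2, q)·C(p+q−2, p)`, which equals
`(1/(p+q−1))·C(p+q−1, p−1)·C(p+q−1, q−1)`. -/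
theorem stmt19 (p q : ℕ) (hp : 1 ≤ p) (hq : 1 ≤ q) :
    (({sp : List Bool × List Bool |
          sp.1.count false = p - 1 ∧ sp.1.count true = q - 1 ∧
          sp.2.count false = p - 1 ∧ sp.2.count true = q - 1 ∧
          ∀ pt : ℕ × ℕ, pt ∈ stepPoints (1, 0) sp.1 → pt ∉ stepPoints (0, 1) sp.2}.ncard : ℚ))
        = (((p + q - 2).choose (q - 1) : ℚ)) ^ 2
            - ((p + q - 2).choose q) * ((p + q - 2).choose p) ∧
      (({sp : List Bool × List Bool |
          sp.1.count false = p - 1 ∧ sp.1.count true = q - 1 ∧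
          sp.2.count false = p - 1 ∧ sp.2.count true = q - 1 ∧
          ∀ pt : ℕ × ℕ, pt ∈ stepPoints (1, 0) sp.1 → pt ∉ stepPoints (0, 1) sp.2}.ncard : ℚ))
        = (1 / ((p + q - 1 : ℕ) : ℚ)) * ((p + q - 1).choose (p - 1))
            * ((p + q - 1).choose (q - 1)) := by
  obtain ⟨a, rfl⟩ : ∃ a, p = a + 1 := ⟨p - 1, by omega⟩
  obtain ⟨b, rfl⟩ : ∃ b, q = b + 1 := ⟨q - 1, by omega⟩
  simp only [show a + 1 - 1 = a from by omega, show b + 1 - 1 = b from by omega,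
    show a + 1 + (b + 1) - 2 = a + b from by omega,
    show a + 1 + (b + 1) - 1 = a + b + 1 from by omega]
  rw [Stmt19.set_eq a b]
  have hsplit := Stmt19.ncard_split a b
  have hq2 := Stmt19.qid a b
  have hcast : ((Stmt19.PP a b a b \ Stmt19.Meets).ncard : ℚ)
      = ((a + b).choose b : ℚ) ^ 2
        - ((a + b).choose (b + 1) : ℚ) * ((a + b).choose (a + 1) : ℚ) := by
    have h := congrArg (fun n : ℕ => (n : ℚ)) hsplit
    push_cast at h
    ring_nf at h ⊢
    linarith
  exact ⟨hcast, by rw [hcast, hq2]⟩
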